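/- Consider the distributionally robust optimization problem: minimize f(x) subject to sup over P_{β̂_n} ∈ 𝒫 of ρ(a_jᵀ(β̂_n)x − b_j(β̂_n)) ≤ Δ_j for j = 1,…,m, where 𝒫 = {μ : d₁(Φ*_k(F̂_n), μ) ≤ ε} is the Wasserstein ball of radius ε around the bootstrap empirical distribution, ρ is any law-invariant risk functional (a functional of the distribution of its argument), and suppose ε is chosen so that P(d₁(Φ(F), Φ*_k(F̂_n)) ≥ ε) ≤ δ for the true distribution Φ(F) of β̂_n. Then, if the problem is feasible with optimizer x̂*_{n,k}, for each j = 1,…,m: P(ρ(a_jᵀ(β̂_n) x̂*_{n,k} − b_j(β̂_n)) ≤ Δ_j) ≥ 1 − δ, where ρ is evaluated under the true distribution Φ(F) of β̂_n. -/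
import Mathlib


open MeasureTheory Matrix
open scoped ENNReal NNReal BigOperators

noncomputable section

/-- Euclidean norm on `Fin d → ℝ`. -/
def euclNorm {d : ℕ} (v : Fin d → ℝ) : ℝ := Real.sqrt (∑ i, v i ^ 2)

/-- `q`-Wasserstein distance between measures on `Fin d → ℝ` (Euclidean norm cost). -/
def wassE (q : ℝ) {d : ℕ} (μ ν : Measure (Fin d → ℝ)) : ℝ :=
  sInf { r : ℝ | ∃ γ : Measure ((Fin d → ℝ) × (Fin d → ℝ)),
    γ.map Prod.fst = μ ∧ γ.map Prod.snd = ν ∧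
    r = (∫ z, euclNorm (z.1 - z.2) ^ q ∂γ) ^ (1 / q) }

/-- `q`-Wasserstein distance between measures on `ℝ`. -/
def wassR (q : ℝ) (μ ν : Measure ℝ) : ℝ :=
  sInf { r : ℝ | ∃ γ : Measure (ℝ × ℝ),
    γ.map Prod.fst = μ ∧ γ.map Prod.snd = ν ∧
    r = (∫ z, |z.1 - z.2| ^ q ∂γ) ^ (1 / q) }

/-- Empirical measure of `k` points. -/
def empMeasure {E : Type*} [MeasurableSpace E] {k : ℕ} (pts : Fin k → E) : Measure E :=
  (k : ℝ≥0∞)⁻¹ • ∑ i, Measure.dirac (pts i)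

instance empMeasure.instIsFiniteMeasure {E : Type*} [MeasurableSpace E] {k : ℕ}
    (pts : Fin k → E) : IsFiniteMeasure (empMeasure pts) := by
  constructor
  have h : (∑ i, Measure.dirac (pts i)) Set.univ = (k : ℝ≥0∞) := by
    simp [Measure.finset_sum_apply]
  rw [empMeasure, Measure.smul_apply, h, smul_eq_mul]
  by_cases hk : k = 0
  · subst hk; simp
  · rw [ENNReal.inv_mul_cancel (by exact_mod_cast hk) (ENNReal.natCast_ne_top k)]
    exact ENNReal.one_lt_top

/-- Spectral norm (operator norm w.r.t. Euclidean norms). -/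
def specNorm {m n : ℕ} (A : Matrix (Fin m) (Fin n) ℝ) : ℝ :=
  ‖LinearMap.toContinuousLinearMap (Matrix.toEuclideanLin A)‖

/-- Orlicz (quasi-)norm of order `α` of the identity under a distribution `F` on `ℝ`. -/
def orlicz (α : ℝ) (F : Measure ℝ) : ℝ :=
  sInf { t : ℝ | 0 < t ∧ ∫ x, Real.exp ((|x| / t) ^ α) ∂F ≤ 2 }

/-- The OLS map `(XᵀX)⁻¹Xᵀ`. -/
def olsM {n p : ℕ} (X : Matrix (Fin n) (Fin p) ℝ) : Matrix (Fin p) (Fin n) ℝ :=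
  (Xᵀ * X)⁻¹ * Xᵀ

/-- Center a vector by subtracting the mean of its entries. -/
def center {n : ℕ} (v : Fin n → ℝ) : Fin n → ℝ := fun i => v i - (∑ j, v j) / n

/-- Projection onto the column space of `X`. -/
def projMat {n p : ℕ} (X : Matrix (Fin n) (Fin p) ℝ) : Matrix (Fin n) (Fin n) ℝ :=
  X * (Xᵀ * X)⁻¹ * Xᵀ

/-- The matrix `(1/n)𝟙𝟙ᵀ + Π`. -/
def covMat {n p : ℕ} (X : Matrix (Fin n) (Fin p) ℝ) : Matrix (Fin n) (Fin n) ℝ :=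
  (n : ℝ)⁻¹ • Matrix.of (fun _ _ => (1 : ℝ)) + projMat X

/-- Uniform distribution on `Fin n`. -/
def unifFin (n : ℕ) : Measure (Fin n) := empMeasure (fun i : Fin n => i)

lemma euclNorm_sub_symm {d : ℕ} (x y : Fin d → ℝ) :
    euclNorm (x - y) = euclNorm (y - x) := by
  unfold euclNorm
  congr 1
  apply Finset.sum_congr rfl
  intro i _
  simp [Pi.sub_apply]
  ring

lemma euclNorm_continuous {d : ℕ} : Continuous (euclNorm (d := d)) := by
  unfold euclNorm
  exact Real.continuous_sqrt.comp (continuous_finset_sum _ fun i _ =>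
    (continuous_apply i).pow 2)

lemma wassE_symm (q : ℝ) {d : ℕ} (μ ν : Measure (Fin d → ℝ)) :
    wassE q μ ν = wassE q ν μ := by
  have key : ∀ (μ ν : Measure (Fin d → ℝ)) (r : ℝ),
      (∃ γ : Measure ((Fin d → ℝ) × (Fin d → ℝ)),
        γ.map Prod.fst = μ ∧ γ.map Prod.snd = ν ∧
        r = (∫ z, euclNorm (z.1 - z.2) ^ q ∂γ) ^ (1 / q)) →
      (∃ γ : Measure ((Fin d → ℝ) × (Fin d → ℝ)),
        γ.map Prod.fst = ν ∧ γ.map Prod.snd = μ ∧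
        r = (∫ z, euclNorm (z.1 - z.2) ^ q ∂γ) ^ (1 / q)) := by
    rintro μ ν r ⟨γ, h1, h2, h3⟩
    refine ⟨γ.map Prod.swap, ?_, ?_, ?_⟩
    · rw [Measure.map_map measurable_fst measurable_swap]
      exact h2
    · rw [Measure.map_map measurable_snd measurable_swap]
      exact h1
    · have hm : Measurable fun z : (Fin d → ℝ) × (Fin d → ℝ) =>
          euclNorm (z.1 - z.2) ^ q :=
        ((euclNorm_continuous.comp (continuous_fst.sub continuous_snd)).measurable).pow
          measurable_const
      rw [h3]
      congr 1
      rw [integral_map measurable_swap.aemeasurable hm.aestronglyMeasurable]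
      apply integral_congr_ae
      filter_upwards with z
      simp only [Prod.swap]
      rw [euclNorm_sub_symm]
  unfold wassE
  congr 1
  ext r
  exact ⟨key μ ν r, key ν μ r⟩

/-- Corollary 1 of the paper, out-of-sample safety guarantee:
if the Wasserstein radius `εr` satisfies `P(d₁(Φ(F), Φ*_k(F̂_n)) ≥ εr) ≤ δ` and `x̂*` is an
optimizer of the distributionally robust problem with ambiguity set
`𝒫(ω) = {μ : d₁(Φ*_k(F̂_n)(ω), μ) ≤ εr}` and law-invariant risk functional `ρ`, then for each `j`,
`P(ρ_{Φ(F)}(a_jᵀ(β̂_n)x̂* − b_j(β̂_n)) ≤ Δ_j) ≥ 1 − δ`. -/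
theorem stmt16 (n p k d m : ℕ) (X : Matrix (Fin n) (Fin p) ℝ) (hX : X.rank = p)
    (Ω : Type*) [MeasurableSpace Ω] (P : Measure Ω) [IsProbabilityMeasure P]
    (F : Measure ℝ) [IsProbabilityMeasure F]
    (β : Fin p → ℝ) (ε : Ω → Fin n → ℝ) (Idx : Ω → Fin k → Fin n → Fin n)
    (hlaw : Measure.map (fun ω => (ε ω, Idx ω)) P
      = (Measure.pi fun _ : Fin n => F).prod
          (Measure.pi fun _ : Fin k => Measure.pi fun _ : Fin n => unifFin n))
    -- the optimization data: convex objective, affine constraint data, risk limits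
    (f : (Fin d → ℝ) → ℝ) (hf : ConvexOn ℝ Set.univ f)
    (a : Fin m → (Fin p → ℝ) → (Fin d → ℝ)) (b : Fin m → (Fin p → ℝ) → ℝ)
    (ha : ∀ j, ∃ (A : Matrix (Fin d) (Fin p) ℝ) (a0 : Fin d → ℝ),
      ∀ βv, a j βv = A.mulVec βv + a0)
    (hb : ∀ j, ∃ (bv : Fin p → ℝ) (b0 : ℝ), ∀ βv, b j βv = bv ⬝ᵥ βv + b0)
    (Δ : Fin m → ℝ)
    -- a law-invariant risk functional: a functional of the distribution of the random variable
    (ρ : Measure ℝ → ℝ)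
    (εr δ : ℝ) (hδ : 0 < δ) (hδ1 : δ < 1) (hεr : 0 < εr) :
    let y : Ω → Fin n → ℝ := fun ω => X.mulVec β + ε ω
    let bhat : Ω → Fin p → ℝ := fun ω => (olsM X).mulVec (y ω)
    let rhat : Ω → Fin n → ℝ := fun ω => y ω - X.mulVec (bhat ω)
    let bstar : Ω → Fin k → Fin p → ℝ := fun ω i =>
      (olsM X).mulVec (X.mulVec (bhat ω) + fun j => center (rhat ω) (Idx ω i j))
    let Phistar : Ω → Measure (Fin p → ℝ) := fun ω => empMeasure (bstar ω)
    let PhiF : Measure (Fin p → ℝ) := Measure.map bhat P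
    let g : Fin m → (Fin d → ℝ) → (Fin p → ℝ) → ℝ := fun j x βv => a j βv ⬝ᵥ x - b j βv
    -- feasibility for the distributionally robust constraints with bootstrap ambiguity set
    let Feas : Ω → (Fin d → ℝ) → Prop := fun ω x => ∀ j, ∀ μ : Measure (Fin p → ℝ),
      IsProbabilityMeasure μ → wassE 1 (Phistar ω) μ ≤ εr → ρ (μ.map (g j x)) ≤ Δ j
    -- the radius is chosen so that the ambiguity set contains `Φ(F)` with probability `≥ 1 − δ`
    P {ω | εr ≤ wassE 1 PhiF (Phistar ω)} ≤ ENNReal.ofReal δ →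
    -- `xhat` is an optimizer of the distributionally robust program
    ∀ xhat : Ω → Fin d → ℝ, (∀ ω, Feas ω (xhat ω)) →
      (∀ ω x, Feas ω x → f (xhat ω) ≤ f x) →
      ∀ j, ENNReal.ofReal (1 - δ) ≤ P {ω | ρ (PhiF.map (g j (xhat ω))) ≤ Δ j} := by
  intro y bhat rhat bstar Phistar PhiF g Feas hrad xhat hfeas hopt j
  -- the pair (ε, Idx) is a.e.-measurable since its pushforward is a nonzero measure
  have hbhat : AEMeasurable bhat P := by
    rcases Nat.eq_zero_or_pos n with hn | hn
    · -- degenerate case: `n = 0` forces `p = 0`, so the codomain is a subsingleton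
      have hp : p = 0 := by
        have h1 := X.rank_le_card_height
        rw [hX, hn] at h1
        simpa using h1
      subst hp
      haveI : Subsingleton (Fin 0 → ℝ) := ⟨fun f g => funext fun i => i.elim0⟩
      exact aemeasurable_of_subsingleton_codomain
    · haveI : IsProbabilityMeasure (unifFin n) := by
        constructor
        rw [unifFin, empMeasure, Measure.smul_apply,
          Measure.finset_sum_apply]
        simp only [Measure.dirac_apply_of_mem (Set.mem_univ _), smul_eq_mul]
        rw [Finset.sum_const, Finset.card_univ, Fintype.card_fin, nsmul_eq_mul, mul_one,
          ENNReal.inv_mul_cancel (by exact_mod_cast hn.ne') (ENNReal.natCast_ne_top n)]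
      have hae : AEMeasurable (fun ω => (ε ω, Idx ω)) P := by
        by_contra h
        rw [Measure.map_of_not_aemeasurable h] at hlaw
        exact (IsProbabilityMeasure.ne_zero
          ((Measure.pi fun _ : Fin n => F).prod
            (Measure.pi fun _ : Fin k => Measure.pi fun _ : Fin n => unifFin n))) hlaw.symm
      have hεm : AEMeasurable ε P := measurable_fst.comp_aemeasurable hae
      have hcont : Measurable fun v : Fin n → ℝ => (olsM X).mulVec (X.mulVec β + v) := by
        apply measurable_pi_lambda
        intro i
        simp only [Matrix.mulVec, dotProduct, Pi.add_apply]
        exact Finset.measurable_sum _ fun l _ =>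
          ((measurable_pi_apply l).const_add _).const_mul _
      exact hcont.comp_aemeasurable hεm
  have hPhiF : IsProbabilityMeasure PhiF := Measure.isProbabilityMeasure_map hbhat
  -- complement of the bad event is contained in the good event
  have hincl : {ω | εr ≤ wassE 1 PhiF (Phistar ω)}ᶜ ⊆
      {ω | ρ (PhiF.map (g j (xhat ω))) ≤ Δ j} := by
    intro ω hω
    simp only [Set.mem_compl_iff, Set.mem_setOf_eq, not_le] at hω
    have := hfeas ω j PhiF hPhiF (by rw [wassE_symm]; exact hω.le)
    exact this
  have hcover : (Set.univ : Set Ω) ⊆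
      {ω | εr ≤ wassE 1 PhiF (Phistar ω)} ∪
      {ω | ρ (PhiF.map (g j (xhat ω))) ≤ Δ j} := by
    intro ω _
    by_cases h : εr ≤ wassE 1 PhiF (Phistar ω)
    · exact Or.inl h
    · exact Or.inr (hincl h)
  have h1 : (1 : ℝ≥0∞) ≤ P {ω | εr ≤ wassE 1 PhiF (Phistar ω)} +
      P {ω | ρ (PhiF.map (g j (xhat ω))) ≤ Δ j} := by
    calc (1 : ℝ≥0∞) = P Set.univ := (measure_univ).symm
    _ ≤ P ({ω | εr ≤ wassE 1 PhiF (Phistar ω)} ∪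
        {ω | ρ (PhiF.map (g j (xhat ω))) ≤ Δ j}) := measure_mono hcover
    _ ≤ _ := measure_union_le _ _
  calc ENNReal.ofReal (1 - δ) = 1 - ENNReal.ofReal δ := by
        rw [ENNReal.ofReal_sub _ hδ.le, ENNReal.ofReal_one]
  _ ≤ 1 - P {ω | εr ≤ wassE 1 PhiF (Phistar ω)} := tsub_le_tsub_left hrad 1
  _ ≤ P {ω | ρ (PhiF.map (g j (xhat ω))) ≤ Δ j} := tsub_le_iff_left.mpr h1
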